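/- arXiv:1707.02524 — 6 statements merged into one kernel-verified Lean document; each statement's English description precedes it below -/
import Mathlib

section
/- Let ψ, φ : I → ℝ be C² with φ > 0 on I, both solving (1/2)σ²u'' + μu' - ru = 0, with F = ψ/φ strictly increasing. If h : I → ℝ is C² and H is defined by H(F(x)) = h(x)/φ(x), then H''(F(x)) = (2 / (σ(x)² φ(x) F'(x)²)) · ((1/2)σ(x)²h''(x) + μ(x)h'(x) - r h(x)) for all x ∈ I. -/
open Set Filter Topology

/-- The purely algebraic identity behind the second-derivative formula. -/
lemma key_algebra (P P' P'' W W' W'' K K' K'' S M r d : ℝ) (hS : S ≠ 0) (hW : W ≠ 0)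
    (hB : P' * W - P * W' ≠ 0)
    (hd : d = (P' * W - P * W') / W ^ 2)
    (hP : (1/2) * S^2 * P'' + M * P' - r * P = 0)
    (hWode : (1/2) * S^2 * W'' + M * W' - r * W = 0) :
    ((K'' * W + K' * W' - (K' * W' + K * W'')) * W ^ 2
        - (K' * W - K * W') * (2 * W * W')) / W ^ 4 * d⁻¹ * d⁻¹
      + (K' * W - K * W') / W ^ 2 *
        (-(((P'' * W + P' * W' - (P' * W' + P * W'')) * W ^ 2
            - (P' * W - P * W') * (2 * W * W')) / W ^ 4 * d⁻¹) / d ^ 2)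
    = (2 / (S^2 * W * d^2)) * ((1/2) * S^2 * K'' + M * K' - r * K) := by
  have hP'' : P'' = 2 * (r * P - M * P') / S^2 := by
    field_simp
    linarith
  have hW'' : W'' = 2 * (r * W - M * W') / S^2 := by
    field_simp
    linarith
  subst hP'' hW''
  have hd0 : d ≠ 0 := by rw [hd]; exact div_ne_zero hB (pow_ne_zero _ hW)
  field_simp
  rw [hd]
  field_simp
  ring

/-- Second-derivative formula: if `H(F(x)) = h(x)/φ(x)` with `F = ψ/φ`, then
`H''(F(x)) = (2/(σ(x)²φ(x)F'(x)²)) · ((L-r)h)(x)`. -/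
theorem stmt_1 (a b r : ℝ) (ha : 0 ≤ a) (hab : a < b) (hr : 0 < r)
    (μ σ ψ φ h F H : ℝ → ℝ)
    (hσpos : ∀ x ∈ Set.Ioo a b, 0 < σ x)
    (hφpos : ∀ x ∈ Set.Ioo a b, 0 < φ x)
    (hψC2 : ContDiffOn ℝ 2 ψ (Set.Ioo a b)) (hφC2 : ContDiffOn ℝ 2 φ (Set.Ioo a b))
    (hhC2 : ContDiffOn ℝ 2 h (Set.Ioo a b))
    (hψode : ∀ x ∈ Set.Ioo a b,
      (1/2) * (σ x)^2 * deriv (deriv ψ) x + μ x * deriv ψ x - r * ψ x = 0)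
    (hφode : ∀ x ∈ Set.Ioo a b,
      (1/2) * (σ x)^2 * deriv (deriv φ) x + μ x * deriv φ x - r * φ x = 0)
    (hF : ∀ x ∈ Set.Ioo a b, F x = ψ x / φ x)
    (hF' : ∀ x ∈ Set.Ioo a b, 0 < deriv F x)
    (hFmono : StrictMonoOn F (Set.Ioo a b))
    (hH : ∀ x ∈ Set.Ioo a b, H (F x) = h x / φ x) :
    ∀ x ∈ Set.Ioo a b,
      deriv (deriv H) (F x)
        = (2 / ((σ x)^2 * φ x * (deriv F x)^2)) *
            ((1/2) * (σ x)^2 * deriv (deriv h) x + μ x * deriv h x - r * h x) := by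
  intro x₀ hx₀
  have hs : IsOpen (Set.Ioo a b) := isOpen_Ioo
  have hsn : ∀ {x : ℝ}, x ∈ Set.Ioo a b → Set.Ioo a b ∈ 𝓝 x := fun hx => hs.mem_nhds hx
  have hφne : ∀ x ∈ Set.Ioo a b, φ x ≠ 0 := fun x hx => (hφpos x hx).ne'
  have h2 : (1 : WithTop ℕ∞) + 1 ≤ 2 := by norm_num
  -- pointwise derivatives
  have hd1 : ∀ (f : ℝ → ℝ), ContDiffOn ℝ 2 f (Set.Ioo a b) → ∀ x ∈ Set.Ioo a b,
      HasDerivAt f (deriv f x) x := fun f hf x hx =>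
    ((hf.contDiffAt (hsn hx)).differentiableAt (by norm_num)).hasDerivAt
  have hd2 : ∀ (f : ℝ → ℝ), ContDiffOn ℝ 2 f (Set.Ioo a b) → ∀ x ∈ Set.Ioo a b,
      HasDerivAt (deriv f) (deriv (deriv f) x) x := fun f hf x hx =>
    ((((hf.deriv_of_isOpen hs h2).contDiffAt (hsn hx))).differentiableAt (by norm_num)).hasDerivAt
  -- derivative of F on the interval
  have hFev : ∀ x ∈ Set.Ioo a b, F =ᶠ[𝓝 x] fun y => ψ y / φ y := by
    intro x hx
    filter_upwards [hsn hx] with y hy using hF y hy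
  have hFd : ∀ x ∈ Set.Ioo a b, HasDerivAt F
      ((deriv ψ x * φ x - ψ x * deriv φ x) / φ x ^ 2) x := fun x hx =>
    (((hd1 ψ hψC2 x hx).div (hd1 φ hφC2 x hx) (hφne x hx))).congr_of_eventuallyEq (hFev x hx)
  have hFval : ∀ x ∈ Set.Ioo a b, deriv F x
      = (deriv ψ x * φ x - ψ x * deriv φ x) / φ x ^ 2 := fun x hx => (hFd x hx).deriv
  have hFd' : ∀ x ∈ Set.Ioo a b, HasDerivAt F (deriv F x) x := by
    intro x hx
    rw [hFval x hx]; exact hFd x hx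
  -- G = h / φ
  set G : ℝ → ℝ := fun y => h y / φ y with hG_def
  have hGd : ∀ x ∈ Set.Ioo a b, HasDerivAt G
      ((deriv h x * φ x - h x * deriv φ x) / φ x ^ 2) x := fun x hx =>
    (hd1 h hhC2 x hx).div (hd1 φ hφC2 x hx) (hφne x hx)
  have hGval : ∀ x ∈ Set.Ioo a b, deriv G x
      = (deriv h x * φ x - h x * deriv φ x) / φ x ^ 2 := fun x hx => (hGd x hx).deriv
  have hGd' : ∀ x ∈ Set.Ioo a b, HasDerivAt G (deriv G x) x := by
    intro x hx
    rw [hGval x hx]; exact hGd x hx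
  have hW : φ x₀ ≠ 0 := hφne x₀ hx₀
  have hden : HasDerivAt (fun y => φ y ^ 2) (2 * φ x₀ * deriv φ x₀) x₀ := by
    have := (hd1 φ hφC2 x₀ hx₀).fun_pow 2
    refine this.congr_deriv ?_
    push_cast
    ring
  -- second derivative of F at x₀
  have hF2x : HasDerivAt (deriv F)
      (((deriv (deriv ψ) x₀ * φ x₀ + deriv ψ x₀ * deriv φ x₀
          - (deriv ψ x₀ * deriv φ x₀ + ψ x₀ * deriv (deriv φ) x₀)) * φ x₀ ^ 2
        - (deriv ψ x₀ * φ x₀ - ψ x₀ * deriv φ x₀) * (2 * φ x₀ * deriv φ x₀)) / φ x₀ ^ 4) x₀ := by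
    have hnum : HasDerivAt (fun y => deriv ψ y * φ y - ψ y * deriv φ y)
        (deriv (deriv ψ) x₀ * φ x₀ + deriv ψ x₀ * deriv φ x₀
          - (deriv ψ x₀ * deriv φ x₀ + ψ x₀ * deriv (deriv φ) x₀)) x₀ :=
      ((hd2 ψ hψC2 x₀ hx₀).mul (hd1 φ hφC2 x₀ hx₀)).sub
        ((hd1 ψ hψC2 x₀ hx₀).mul (hd2 φ hφC2 x₀ hx₀))
    have hev : deriv F =ᶠ[𝓝 x₀] fun y => (deriv ψ y * φ y - ψ y * deriv φ y) / φ y ^ 2 := by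
      filter_upwards [hsn hx₀] with y hy using hFval y hy
    have := (hnum.fun_div hden (pow_ne_zero 2 hW)).congr_of_eventuallyEq hev
    refine this.congr_deriv ?_
    ring
  -- second derivative of G at x₀
  have hG2x : HasDerivAt (deriv G)
      (((deriv (deriv h) x₀ * φ x₀ + deriv h x₀ * deriv φ x₀
          - (deriv h x₀ * deriv φ x₀ + h x₀ * deriv (deriv φ) x₀)) * φ x₀ ^ 2
        - (deriv h x₀ * φ x₀ - h x₀ * deriv φ x₀) * (2 * φ x₀ * deriv φ x₀)) / φ x₀ ^ 4) x₀ := by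
    have hnum : HasDerivAt (fun y => deriv h y * φ y - h y * deriv φ y)
        (deriv (deriv h) x₀ * φ x₀ + deriv h x₀ * deriv φ x₀
          - (deriv h x₀ * deriv φ x₀ + h x₀ * deriv (deriv φ) x₀)) x₀ :=
      ((hd2 h hhC2 x₀ hx₀).mul (hd1 φ hφC2 x₀ hx₀)).sub
        ((hd1 h hhC2 x₀ hx₀).mul (hd2 φ hφC2 x₀ hx₀))
    have hev : deriv G =ᶠ[𝓝 x₀] fun y => (deriv h y * φ y - h y * deriv φ y) / φ y ^ 2 := by
      filter_upwards [hsn hx₀] with y hy using hGval y hy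
    have := (hnum.fun_div hden (pow_ne_zero 2 hW)).congr_of_eventuallyEq hev
    refine this.congr_deriv ?_
    ring
  -- local inverse of F at x₀
  have hFC2 : ContDiffAt ℝ 2 F x₀ := by
    have : ContDiffAt ℝ 2 (fun y => ψ y / φ y) x₀ :=
      (hψC2.contDiffAt (hsn hx₀)).div (hφC2.contDiffAt (hsn hx₀)) hW
    exact this.congr_of_eventuallyEq (hFev x₀ hx₀)
  have hd0 : deriv F x₀ ≠ 0 := (hF' x₀ hx₀).ne'
  have hfe : HasFDerivAt F
      (ContinuousLinearEquiv.unitsEquivAut ℝ (Units.mk0 (deriv F x₀) hd0) : ℝ →L[ℝ] ℝ) x₀ :=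
    (hFd' x₀ hx₀).hasFDerivAt_equiv hd0
  have hn : (2 : WithTop ℕ∞) ≠ 0 := by norm_num
  set g := hFC2.localInverse hfe hn with hg_def
  have hgx : g (F x₀) = x₀ := hFC2.localInverse_apply_image hfe hn
  have hg2 : ContDiffAt ℝ 2 g (F x₀) := hFC2.to_localInverse hfe hn
  have hgFx : ∀ᶠ y in 𝓝 (F x₀), F (g y) = y :=
    (hFC2.hasStrictFDerivAt' hfe hn).eventually_right_inverse
  have hgs : ∀ᶠ y in 𝓝 (F x₀), g y ∈ Set.Ioo a b := by
    have hmem : Set.Ioo a b ∈ 𝓝 (g (F x₀)) := by rw [hgx]; exact hsn hx₀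
    exact hg2.continuousAt.eventually_mem hmem
  have hgdiff : ∀ᶠ y in 𝓝 (F x₀), DifferentiableAt ℝ g y := by
    filter_upwards [hg2.eventually (by norm_num)] with y hy
    exact hy.differentiableAt (by norm_num)
  -- derivative of g eventually
  have keyg : ∀ᶠ y in 𝓝 (F x₀), deriv g y = (deriv F (g y))⁻¹ := by
    filter_upwards [hgs, hgdiff, hgFx.eventually_nhds] with y h1 h2 h3
    have hgy : HasDerivAt g (deriv g y) y := h2.hasDerivAt
    have hFg : HasDerivAt (F ∘ g) (deriv F (g y) * deriv g y) y :=
      (hFd' (g y) h1).comp y hgy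
    have hid : HasDerivAt (F ∘ g) 1 y := by
      have hev : F ∘ g =ᶠ[𝓝 y] id := by
        filter_upwards [h3] with z hz using hz
      exact (hasDerivAt_id y).congr_of_eventuallyEq hev
    have huniq : deriv F (g y) * deriv g y = 1 := hFg.unique hid
    exact eq_inv_of_mul_eq_one_right huniq
  -- derivative of H eventually
  have Hev : ∀ᶠ y in 𝓝 (F x₀), H y = G (g y) := by
    filter_upwards [hgs, hgFx] with y h1 h2
    have := hH (g y) h1
    rw [h2] at this
    exact this
  have key1 : ∀ᶠ y in 𝓝 (F x₀), deriv H y = deriv G (g y) * (deriv F (g y))⁻¹ := by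
    filter_upwards [hgs, hgdiff, keyg, Hev.eventually_nhds] with y h1 h2 h3 h4
    have hgy : HasDerivAt g (deriv g y) y := h2.hasDerivAt
    have hc : HasDerivAt (G ∘ g) (deriv G (g y) * deriv g y) y :=
      (hGd' (g y) h1).comp y hgy
    have : deriv H y = deriv (G ∘ g) y := Filter.EventuallyEq.deriv_eq h4
    rw [this, hc.deriv, h3]
  -- assemble the second derivative of H at F x₀
  have hdg0 : deriv g (F x₀) = (deriv F x₀)⁻¹ := by
    have := keyg.self_of_nhds
    rwa [hgx] at this
  have hg0 : HasDerivAt g (deriv F x₀)⁻¹ (F x₀) := by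
    rw [← hdg0]
    exact (hg2.differentiableAt hn).hasDerivAt
  rw [← hgx] at hF2x hG2x
  have hcomp1 : HasDerivAt (fun y => deriv G (g y)) _ (F x₀) := hG2x.comp (F x₀) hg0
  have hcomp2 : HasDerivAt (fun y => deriv F (g y)) _ (F x₀) := hF2x.comp (F x₀) hg0
  have hFgne : deriv F (g (F x₀)) ≠ 0 := by rw [hgx]; exact hd0
  have hinv : HasDerivAt (fun y => (deriv F (g y))⁻¹) _ (F x₀) := hcomp2.inv hFgne
  have hprod := hcomp1.fun_mul hinv
  have hder2 : deriv (deriv H) (F x₀)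
      = deriv (fun y => deriv G (g y) * (deriv F (g y))⁻¹) (F x₀) :=
    Filter.EventuallyEq.deriv_eq key1
  rw [hder2, hprod.deriv, hgx, hGval x₀ hx₀]
  exact key_algebra (ψ x₀) (deriv ψ x₀) (deriv (deriv ψ) x₀) (φ x₀) (deriv φ x₀)
    (deriv (deriv φ) x₀) (h x₀) (deriv h x₀) (deriv (deriv h) x₀) (σ x₀) (μ x₀) r
    (deriv F x₀) (hσpos x₀ hx₀).ne' hW
    (by intro h0; apply hd0; rw [hFval x₀ hx₀, h0, zero_div])
    (hFval x₀ hx₀) (hψode x₀ hx₀) (hφode x₀ hx₀)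
end

section
/- Let G : [0,∞) → ℝ be continuous with G(0) = 0, differentiable on (0,∞) \ {a} for some a > 0, strictly concave on (0,a), with lim_{y→0⁺} 1/G'(y) = 0 (i.e. G'(0⁺) = +∞). Let T be the set of points (y,v) with y > 0 lying on some tangent line L_z(y) = G'(z)(y - z) + G(z) with z ∈ (0,a] (using the left derivative at a). Then T equals the set X = {(y,v) : y > 0, v ≥ G̃(y)}, where G̃(y) = G(y) for 0 < y < a and G̃(y) = G'(a⁻)(y - a) + G(a) for y ≥ a. -/
open Set Filter
open scoped Topology

/-- The set of points on tangent lines to `G` drawn at points of `(0,a]` equals the set of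
points lying (weakly) above the envelope `G̃` (which is `G` on `(0,a)` and the tangent ray
at `a⁻` afterwards). -/
theorem stmt_3 (a Da : ℝ) (ha : 0 < a) (G : ℝ → ℝ)
    (hGcont : ContinuousOn G (Set.Ici 0)) (hG0 : G 0 = 0)
    (hGdiff : ∀ y ∈ Set.Ioo 0 a, DifferentiableAt ℝ G y)
    (hGconc : StrictConcaveOn ℝ (Set.Ioo 0 a) G)
    (hDa : HasDerivWithinAt G Da (Set.Iio a) a)
    (hG'0 : Tendsto (deriv G) (𝓝[>] (0:ℝ)) atTop) :
    {p : ℝ × ℝ | 0 < p.1 ∧ ∃ z ∈ Set.Ioc 0 a,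
        p.2 = (if z = a then Da else deriv G z) * (p.1 - z) + G z}
      = {p : ℝ × ℝ | 0 < p.1 ∧
          (if p.1 < a then G p.1 else Da * (p.1 - a) + G a) ≤ p.2} := by
  -- Lemma A : tangent line lies above graph on (0,a)
  have hA : ∀ z ∈ Ioo 0 a, ∀ y ∈ Ioo 0 a, G y ≤ deriv G z * (y - z) + G z := by
    intro z hz y hy
    rcases lt_trichotomy y z with h | rfl | h
    · have key := hGconc.deriv_lt_slope hy hz h (hGdiff z hz)
      rw [slope_def_field] at key
      rw [lt_div_iff₀ (by linarith : (0:ℝ) < z - y)] at key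
      nlinarith
    · simp
    · have key := hGconc.slope_lt_deriv hz hy h (hGdiff z hz)
      rw [slope_def_field] at key
      rw [div_lt_iff₀ (by linarith : (0:ℝ) < y - z)] at key
      nlinarith
  -- G tendsto G a from the left
  have hnhds_eq : 𝓝[Iio a] a = 𝓝[Ioo 0 a] a := by
    rw [← Ioi_inter_Iio, nhdsWithin_inter_of_mem]
    exact mem_nhdsWithin_of_mem_nhds (Ioi_mem_nhds ha)
  have hGtenda : Tendsto G (𝓝[<] a) (𝓝 (G a)) := by
    rw [hnhds_eq]
    exact (hGcont a ha.le).mono_left (nhdsWithin_mono a (fun x hx => hx.1.le))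
  -- Lemma A' : tangent lines pass above the point (a, G a)
  have hA' : ∀ z ∈ Ioo 0 a, G a ≤ deriv G z * (a - z) + G z := by
    intro z hz
    have htd : Tendsto (fun y => deriv G z * (y - z) + G z) (𝓝[<] a)
        (𝓝 (deriv G z * (a - z) + G z)) := by
      apply Tendsto.mono_left _ nhdsWithin_le_nhds
      exact ((tendsto_const_nhds.mul ((continuous_id.sub continuous_const).tendsto a)).add
        tendsto_const_nhds)
    refine le_of_tendsto_of_tendsto hGtenda htd ?_
    have hIoo : Ioo z a ∈ 𝓝[<] a := Ioo_mem_nhdsLT_of_mem ⟨hz.2, le_refl a⟩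
    filter_upwards [hIoo] with y hy
    exact hA z hz y ⟨lt_trans hz.1 hy.1, hy.2⟩
  -- slope tendsto Da from the left
  have hslopeDa : Tendsto (slope G a) (𝓝[<] a) (𝓝 Da) := by
    have h := hasDerivWithinAt_iff_tendsto_slope.1 hDa
    rwa [Set.diff_singleton_eq_self (by simp : a ∉ Iio a)] at h
  -- slope below derivative
  have hlow : ∀ z ∈ Ioo 0 a, slope G a z ≤ deriv G z := by
    intro z hz
    rw [slope_def_field, div_le_iff_of_neg (by linarith [hz.2] : z - a < 0)]
    nlinarith [hA' z hz]
  -- antitonicity of the derivative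
  have hanti : StrictAntiOn (deriv G) (Ioo 0 a) := hGconc.strictAntiOn_deriv hGdiff
  -- Lemma B : Da is a lower bound for the derivative
  have hB : ∀ z ∈ Ioo 0 a, Da ≤ deriv G z := by
    intro z hz
    refine le_of_tendsto hslopeDa ?_
    filter_upwards [Ioo_mem_nhdsLT_of_mem (⟨hz.2, le_refl a⟩ : a ∈ Ioc z a)] with w hw
    have hw' : w ∈ Ioo 0 a := ⟨lt_trans hz.1 hw.1, hw.2⟩
    exact le_trans (hlow w hw') (hanti hz hw' hw.1).le
  -- the derivative tends to Da at a from the left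
  have hDtend : Tendsto (deriv G) (𝓝[<] a) (𝓝 Da) := by
    have hmem : Ioo (a/2) a ∈ 𝓝[<] a := Ioo_mem_nhdsLT_of_mem ⟨by linarith, le_refl a⟩
    have hup : ∀ z ∈ Ioo (a/2) a, deriv G z ≤ 2 * slope G a (2*z - a) - slope G a z := by
      intro z hz
      have hx : 2*z - a ∈ Ioo 0 a := ⟨by linarith [hz.1], by linarith [hz.2]⟩
      have hzz : z ∈ Ioo 0 a := ⟨by linarith [hz.1, ha], hz.2⟩
      have key := (hGconc.deriv_lt_slope hx hzz (by linarith [hz.2]) (hGdiff z hzz)).le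
      have e : slope G (2*z-a) z = 2 * slope G a (2*z-a) - slope G a z := by
        have d1 : z - a ≠ 0 := by
          intro h; linarith [sub_eq_zero.1 h, hz.2]
        have d2 : z - (2*z - a) ≠ 0 := by intro h; apply d1; linarith
        have d3 : 2*z - a - a ≠ 0 := by intro h; apply d1; linarith
        rw [slope_def_field, slope_def_field, slope_def_field]
        field_simp
        ring
      rw [e] at key
      exact key
    have htends : Tendsto (fun z => 2 * slope G a (2*z - a) - slope G a z) (𝓝[<] a)
        (𝓝 (2*Da - Da)) := by
      refine Tendsto.sub ?_ hslopeDa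
      refine Tendsto.const_mul _ (hslopeDa.comp ?_)
      apply tendsto_nhdsWithin_of_tendsto_nhds_of_eventually_within
      · have h0 : Tendsto (fun z : ℝ => 2*z - a) (𝓝 a) (𝓝 (2*a - a)) :=
          ((continuous_const.mul continuous_id).sub continuous_const).tendsto a
        have h1 : 2*a - a = a := by ring
        rw [h1] at h0
        exact h0.mono_left nhdsWithin_le_nhds
      · filter_upwards [self_mem_nhdsWithin] with z hz
        exact mem_Iio.2 (by linarith [mem_Iio.1 hz])
    have h2 : (2:ℝ)*Da - Da = Da := by ring
    rw [h2] at htends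
    refine tendsto_of_tendsto_of_tendsto_of_le_of_le' hslopeDa htends ?_ ?_
    · filter_upwards [hmem] with z hz; exact hlow z ⟨by linarith [hz.1], hz.2⟩
    · filter_upwards [hmem] with z hz; exact hup z hz
  -- continuity of the derivative on (0,a)
  have hDcont : ContinuousOn (deriv G) (Ioo 0 a) := by
    have hmono : StrictMonoOn (fun z => -deriv G z) (Ioo 0 a) :=
      fun x hx y hy hxy => neg_lt_neg (hanti hx hy hxy)
    intro x hx
    have hdarb : ∀ u v : ℝ, u ∈ Ioo 0 a → v ∈ Ioo 0 a → u ≤ v → ∀ m : ℝ,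
        m < deriv G u → deriv G v < m → ∃ c ∈ Ioo u v, deriv G c = m := by
      intro u v hu hv huv m hmu hmv
      have hsub : Icc u v ⊆ Ioo 0 a := fun t ht =>
        ⟨lt_of_lt_of_le hu.1 ht.1, lt_of_le_of_lt ht.2 hv.2⟩
      obtain ⟨c, hc, hc'⟩ := exists_hasDerivWithinAt_eq_of_lt_of_gt huv
        (fun t ht => ((hGdiff t (hsub ht)).hasDerivAt).hasDerivWithinAt) hmu hmv
      exact ⟨c, hc, hc'⟩
    have hCA : ContinuousAt (fun z => -deriv G z) x := by
      apply hmono.continuousAt_of_exists_between (isOpen_Ioo.mem_nhds hx)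
      · intro b hb
        have hc₀ : x / 2 ∈ Ioo 0 a := ⟨by linarith [hx.1], by linarith [hx.1, hx.2]⟩
        have hlt : x / 2 < x := by linarith [hx.1]
        have h1 : -deriv G (x / 2) < -deriv G x := neg_lt_neg (hanti hc₀ hx hlt)
        rcases le_or_gt b (-deriv G (x / 2)) with h | h
        · exact ⟨x / 2, hc₀, h, h1⟩
        · obtain ⟨c, hc, hc'⟩ := hdarb (x / 2) x hc₀ hx hlt.le (-b) (by linarith) (by linarith)
          exact ⟨c, ⟨lt_trans hc₀.1 hc.1, lt_trans hc.2 hx.2⟩,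
            by simp only [hc']; exact ⟨by linarith, by linarith⟩⟩
      · intro b hb
        have hc₀ : (x + a) / 2 ∈ Ioo 0 a := ⟨by linarith [hx.1, hx.2], by linarith [hx.2]⟩
        have hlt : x < (x + a) / 2 := by linarith [hx.2]
        have h1 : -deriv G x < -deriv G ((x + a) / 2) := neg_lt_neg (hanti hx hc₀ hlt)
        rcases le_or_gt (-deriv G ((x + a) / 2)) b with h | h
        · exact ⟨(x + a) / 2, hc₀, h1, h⟩
        · obtain ⟨c, hc, hc'⟩ := hdarb x ((x + a) / 2) hx hc₀ hlt.le (-b)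
            (by linarith) (by linarith)
          exact ⟨c, ⟨lt_trans hx.1 hc.1, lt_trans hc.2 hc₀.2⟩,
            by simp only [hc']; exact ⟨by linarith, by linarith⟩⟩
    have : ContinuousAt (deriv G) x := by
      have h2 := hCA.neg
      simpa only [Pi.neg_def, neg_neg] using h2
    exact this.continuousWithinAt
  -- Lemma C : the limiting tangent ray passes above the graph on (0,a)
  have hC : ∀ y ∈ Ioo 0 a, G y ≤ Da * (y - a) + G a := by
    intro y hy
    have htd : Tendsto (fun w => Da * (y - w) + G w) (𝓝[<] a) (𝓝 (Da * (y - a) + G a)) :=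
      (((tendsto_const_nhds.mul ((continuous_const.sub continuous_id).tendsto a)).mono_left
        nhdsWithin_le_nhds).add hGtenda)
    refine ge_of_tendsto htd ?_
    filter_upwards [Ioo_mem_nhdsLT_of_mem (⟨hy.2, le_refl a⟩ : a ∈ Ioc y a)] with w hw
    have hw' : w ∈ Ioo 0 a := ⟨lt_trans hy.1 hw.1, hw.2⟩
    have h1 := hA w hw' y hy
    have h2 := hB w hw'
    nlinarith [mul_nonneg (sub_nonneg.2 h2) (sub_nonneg.2 hw.1.le)]
  ext p
  obtain ⟨y, v⟩ := p
  simp only [mem_setOf_eq]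
  constructor
  · rintro ⟨hy, z, hz, hv⟩
    refine ⟨hy, ?_⟩
    by_cases hza : z = a
    · rw [hza] at hv
      rw [if_pos rfl] at hv
      by_cases hylt : y < a
      · rw [if_pos hylt, hv]
        exact hC y ⟨hy, hylt⟩
      · rw [if_neg hylt, hv]
    · have hz' : z ∈ Ioo 0 a := ⟨hz.1, lt_of_le_of_ne hz.2 hza⟩
      rw [if_neg hza] at hv
      by_cases hylt : y < a
      · rw [if_pos hylt, hv]
        exact hA z hz' y ⟨hy, hylt⟩
      · rw [if_neg hylt, hv]
        push_neg at hylt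
        nlinarith [hA' z hz', hB z hz']
  · rintro ⟨hy, hle⟩
    refine ⟨hy, ?_⟩
    set F : ℝ → ℝ := fun z => (if z = a then Da else deriv G z) * (y - z) + G z with hF
    -- continuity of F on (0,a]
    have hFcont : ContinuousOn F (Ioc 0 a) := by
      intro x hx
      rcases lt_or_eq_of_le hx.2 with hxa | hxa
      · have hx' : x ∈ Ioo 0 a := ⟨hx.1, hxa⟩
        have hCA : ContinuousAt (fun z => deriv G z * (y - z) + G z) x :=
          (((hDcont x hx').continuousAt (isOpen_Ioo.mem_nhds hx')).mul
            ((continuous_const.sub continuous_id).continuousAt)).add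
            (hGdiff x hx').continuousAt
        have heq : (fun z => deriv G z * (y - z) + G z) =ᶠ[𝓝 x] F := by
          filter_upwards [Iio_mem_nhds hxa] with z hz
          simp only [hF]
          rw [if_neg (ne_of_lt (mem_Iio.1 hz))]
        exact (hCA.congr heq).continuousWithinAt
      · -- x = a
        rw [hxa]
        have hsub : 𝓝[Ioc 0 a] a ≤ 𝓝[Ioo 0 a] a ⊔ 𝓝[{a}] a := by
          rw [← nhdsWithin_union]
          apply nhdsWithin_mono
          intro t ht
          rcases lt_or_eq_of_le ht.2 with h | h
          · exact Or.inl ⟨ht.1, h⟩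
          · exact Or.inr h
        have hFa : F a = Da * (y - a) + G a := by simp [hF]
        refine Tendsto.mono_left ?_ hsub
        rw [tendsto_sup]
        constructor
        · have h1 : Tendsto (fun z => deriv G z * (y - z) + G z) (𝓝[Ioo 0 a] a)
              (𝓝 (Da * (y - a) + G a)) := by
            refine Tendsto.add (Tendsto.mul ?_ ?_) ?_
            · exact hDtend.mono_left (nhdsWithin_mono a Ioo_subset_Iio_self)
            · exact ((continuous_const.sub continuous_id).tendsto a).mono_left
                nhdsWithin_le_nhds
            · exact (hGcont a ha.le).mono_left
                (nhdsWithin_mono a (fun t ht => ht.1.le))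
          rw [hFa]
          refine h1.congr' ?_
          filter_upwards [self_mem_nhdsWithin] with z hz
          simp only [hF]
          rw [if_neg (ne_of_lt hz.2)]
        · rw [nhdsWithin_singleton]
          exact tendsto_pure_nhds F a
    -- F tends to +∞ at 0⁺
    have hFtop : Tendsto F (𝓝[>] (0:ℝ)) atTop := by
      have hG0' : Tendsto G (𝓝[>] (0:ℝ)) (𝓝 0) := by
        have h0 : Tendsto G (𝓝[Ici (0:ℝ)] 0) (𝓝 (G 0)) := hGcont 0 Set.self_mem_Ici
        rw [hG0] at h0
        exact h0.mono_left (nhdsWithin_mono 0 Ioi_subset_Ici_self)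
      have hmul : Tendsto (fun z => deriv G z * (y - z)) (𝓝[>] (0:ℝ)) atTop := by
        apply Filter.Tendsto.atTop_mul_pos hy hG'0
        have : Tendsto (fun z : ℝ => y - z) (𝓝 (0:ℝ)) (𝓝 (y - 0)) :=
          (continuous_const.sub continuous_id).tendsto 0
        rw [sub_zero] at this
        exact this.mono_left nhdsWithin_le_nhds
      have h1 : Tendsto (fun z => deriv G z * (y - z) + G z) (𝓝[>] (0:ℝ)) atTop :=
        hmul.atTop_add hG0'
      refine h1.congr' ?_
      filter_upwards [mem_nhdsWithin_of_mem_nhds (Iio_mem_nhds ha)] with z hz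
      simp only [hF]
      rw [if_neg (ne_of_lt (mem_Iio.1 hz))]
    -- the endpoint
    set b := min y a with hb
    have hb0 : 0 < b := lt_min hy ha
    have hba : b ≤ a := min_le_right y a
    have hFb : F b = (if y < a then G y else Da * (y - a) + G a) := by
      by_cases hylt : y < a
      · have : b = y := min_eq_left hylt.le
        rw [if_pos hylt, this]
        simp only [hF, if_neg (ne_of_lt hylt)]
        ring
      · push_neg at hylt
        have : b = a := min_eq_right hylt
        rw [if_neg (not_lt.2 hylt), this]
        simp [hF]
    have hFbv : F b ≤ v := by rw [hFb]; exact hle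
    -- find a point with large F value
    obtain ⟨z₀, hz₀b, hz₀v⟩ : ∃ z₀, z₀ ∈ Ioo 0 b ∧ v ≤ F z₀ := by
      have h1 : ∀ᶠ z in 𝓝[>] (0:ℝ), v ≤ F z := hFtop.eventually_ge_atTop v
      have h2 : ∀ᶠ z in 𝓝[>] (0:ℝ), z ∈ Ioo 0 b := by
        filter_upwards [mem_nhdsWithin_of_mem_nhds (Iio_mem_nhds hb0),
          self_mem_nhdsWithin] with z h1 h2
        exact ⟨h2, h1⟩
      obtain ⟨z₀, h⟩ := (h2.and h1).exists
      exact ⟨z₀, h.1, h.2⟩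
    -- intermediate value theorem
    have hsub : Icc z₀ b ⊆ Ioc 0 a := fun t ht => ⟨lt_of_lt_of_le hz₀b.1 ht.1, le_trans ht.2 hba⟩
    have hIVT := intermediate_value_Icc' (le_of_lt hz₀b.2) (hFcont.mono hsub)
    have hvmem : v ∈ Icc (F b) (F z₀) := ⟨hFbv, hz₀v⟩
    obtain ⟨z, hzmem, hFz⟩ := hIVT hvmem
    exact ⟨z, hsub hzmem, hFz.symm⟩
end

section
/- Let G : (0,∞) → ℝ be differentiable except at a point a > 0, strictly concave on (0,a), and on (a,∞) there exists c ≥ a such that G is convex on (a,c) and strictly concave on (c,∞). Then the system of equations G'(z₁) = (G(z₂) - G(z₁))/(z₂ - z₁) = G'(z₂) with 0 < z₁ < a < z₂ has at most one solution (z₁,z₂). -/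
open Set Filter Topology

private lemma tendsto_quot {f : ℝ → ℝ} {c y : ℝ} {l : Filter ℝ} (hl : l ≤ nhds c)
    (hne : c - y ≠ 0) (hc : Filter.Tendsto f l (nhds (f c))) :
    Filter.Tendsto (fun w => (f w - f y) / (w - y)) l (nhds ((f c - f y) / (c - y))) :=
  (hc.sub tendsto_const_nhds).div
    ((((continuous_id.sub continuous_const).tendsto c)).mono_left hl) hne

private lemma strictConcave_Ici {f : ℝ → ℝ} {c : ℝ}
    (hf : StrictConcaveOn ℝ (Set.Ioi c) f) (hc : ContinuousAt f c) :
    StrictConcaveOn ℝ (Set.Ici c) f := by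
  apply strictConcaveOn_of_slope_strict_anti_adjacent (convex_Ici c)
  intro x y z hx hz hxy hyz
  rcases eq_or_lt_of_le (Set.mem_Ici.mp hx) with rfl | hcx
  · -- x = c
    have hcy : c < y := hxy
    set w := (c + y) / 2 with hw
    have hcw : c < w := by rw [hw]; linarith
    have hwy : w < y := by rw [hw]; linarith
    have h1 : (f z - f y) / (z - y) < (f y - f w) / (y - w) :=
      hf.slope_anti_adjacent (Set.mem_Ioi.mpr hcw) (Set.mem_Ioi.mpr (hcy.trans hyz)) hwy hyz
    -- slope f y c ≥ slope f y w via limit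
    have hanti := hf.concaveOn.slope_anti (x := y) (Set.mem_Ioi.mpr hcy)
    have hkey : ∀ w' ∈ Set.Ioo c w, slope f y w ≤ slope f y w' := by
      intro w' hw'
      exact hanti ⟨Set.mem_Ioi.mpr hw'.1, by intro h; simp at h; linarith [hw'.2]⟩
        ⟨Set.mem_Ioi.mpr hcw, by intro h; simp at h; linarith⟩ hw'.2.le
    have htd : Filter.Tendsto (fun w' => (f w' - f y) / (w' - y)) (nhdsWithin c (Set.Ioi c))
        (nhds ((f c - f y) / (c - y))) :=
      tendsto_quot nhdsWithin_le_nhds (by intro h; linarith [sub_eq_zero.mp h]) 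
        (hc.tendsto.mono_left nhdsWithin_le_nhds)
    have hev : ∀ᶠ w' in nhdsWithin c (Set.Ioi c), slope f y w ≤ (f w' - f y) / (w' - y) := by
      filter_upwards [Ioo_mem_nhdsGT_of_mem ⟨le_refl c, hcw⟩] with w' hw'
      simpa [slope_def_field] using hkey w' hw'
    have h2 : slope f y w ≤ (f c - f y) / (c - y) := ge_of_tendsto htd hev
    have h3 : (f c - f y) / (c - y) = (f y - f c) / (y - c) := by
      rw [← neg_sub y c, ← neg_sub (f y) (f c), neg_div_neg_eq]
    have h4 : slope f y w = (f y - f w) / (y - w) := by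
      rw [slope_def_field, ← neg_sub y w, ← neg_sub (f y) (f w), neg_div_neg_eq]
    rw [h4] at h2
    calc (f z - f y) / (z - y) < (f y - f w) / (y - w) := h1
      _ ≤ (f c - f y) / (c - y) := h2
      _ = (f y - f c) / (y - c) := h3
  · exact hf.slope_anti_adjacent (Set.mem_Ioi.mpr hcx)
      (Set.mem_Ioi.mpr (hcx.trans (hxy.trans hyz))) hxy hyz

/-- A line cannot be tangent to `G` at `w₁ ∈ (0,a)` (strictly concave region) and at
`w₂ ∈ (a,∞)` with `w₂` in a region `s` where `G` is convex, while matching the chord slope. -/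
private lemma no_right_convex {a w₁ w₂ : ℝ} {G : ℝ → ℝ} {s : Set ℝ}
    (hw₁ : 0 < w₁) (hw₁a : w₁ < a) (haw₂ : a < w₂)
    (hGcont : ContinuousOn G (Set.Ioi 0))
    (hGdiff : ∀ x ∈ Set.Ioi 0, x ≠ a → DifferentiableAt ℝ G x)
    (hGconc : StrictConcaveOn ℝ (Set.Ioo 0 a) G)
    (hconv : ConvexOn ℝ s G) (hsub : Set.Ioc a w₂ ⊆ s)
    (h1 : deriv G w₁ = (G w₂ - G w₁) / (w₂ - w₁))
    (h2 : (G w₂ - G w₁) / (w₂ - w₁) = deriv G w₂) : False := by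
  have ha : (0:ℝ) < a := hw₁.trans hw₁a
  have hcontA : ContinuousAt G a := hGcont.continuousAt (isOpen_Ioi.mem_nhds ha)
  obtain ⟨n, hn⟩ : ∃ n, deriv G w₁ = n := ⟨_, rfl⟩
  rw [hn] at h1
  have hne : w₂ - w₁ ≠ 0 := ne_of_gt (by linarith)
  have hGw2 : G w₂ - G w₁ = n * (w₂ - w₁) := by
    rw [h1, div_mul_cancel₀ _ hne]
  have hdw2 : deriv G w₂ = n := (h1.trans h2).symm
  have hdiffw1 : DifferentiableAt ℝ G w₁ := hGdiff w₁ hw₁ (ne_of_lt hw₁a)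
  have hdiffw2 : DifferentiableAt ℝ G w₂ := hGdiff w₂ (ha.trans haw₂) (ne_of_gt haw₂)
  -- Step K: chord inequality between the two regions
  have key : ∀ x ∈ Set.Ioo w₁ a, ∀ y ∈ Set.Ioo a w₂, n * (y - x) < G y - G x := by
    intro x hx y hy
    have hs1 : slope G w₁ x < deriv G w₁ :=
      hGconc.slope_lt_deriv ⟨hw₁, hw₁a⟩ ⟨hw₁.trans hx.1, hx.2⟩ hx.1 hdiffw1
    rw [slope_def_field, hn] at hs1
    have e1 : G x - G w₁ < n * (x - w₁) :=
      (div_lt_iff₀ (by linarith [hx.1])).mp hs1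
    have hs2 : slope G y w₂ ≤ deriv G w₂ :=
      hconv.slope_le_deriv (hsub ⟨hy.1, hy.2.le⟩) (hsub ⟨haw₂, le_refl _⟩) hy.2 hdiffw2
    rw [slope_def_field, hdw2] at hs2
    have e2 : G w₂ - G y ≤ n * (w₂ - y) := (div_le_iff₀ (by linarith [hy.2])).mp hs2
    nlinarith [hGw2, e1, e2]
  -- Step L: limit as y → a⁺
  have keyA : ∀ x ∈ Set.Ioo w₁ a, n * (a - x) ≤ G a - G x := by
    intro x hx
    have htd : Filter.Tendsto (fun y => G y - G x - n * (y - x)) (nhdsWithin a (Set.Ioi a))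
        (nhds (G a - G x - n * (a - x))) := by
      apply Filter.Tendsto.sub
      · exact (hcontA.tendsto.mono_left nhdsWithin_le_nhds).sub tendsto_const_nhds
      · exact tendsto_const_nhds.mul
          ((((continuous_id.sub continuous_const).tendsto a)).mono_left nhdsWithin_le_nhds)
    have hev : ∀ᶠ y in nhdsWithin a (Set.Ioi a), 0 ≤ G y - G x - n * (y - x) := by
      filter_upwards [Ioo_mem_nhdsGT_of_mem ⟨le_refl a, haw₂⟩] with y hy
      linarith [key x hx y hy]
    have := ge_of_tendsto htd hev
    linarith
  -- Step M: contradiction from strict concavity near a on the left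
  set x := (2*w₁ + a)/3 with hxdef
  set x' := (w₁ + 2*a)/3 with hx'def
  have hwx : w₁ < x := by rw [hxdef]; linarith
  have hxx' : x < x' := by rw [hxdef, hx'def]; linarith
  have hx'a : x' < a := by rw [hx'def]; linarith
  have hxa : x < a := hxx'.trans hx'a
  have hxmem : x ∈ Set.Ioo (0:ℝ) a := ⟨hw₁.trans hwx, hxa⟩
  have hx'mem : x' ∈ Set.Ioo (0:ℝ) a := ⟨hxmem.1.trans hxx', hx'a⟩
  have h5 : (G x - G w₁) / (x - w₁) < n := by
    have := hGconc.slope_lt_deriv ⟨hw₁, hw₁a⟩ hxmem hwx hdiffw1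
    rwa [slope_def_field, hn] at this
  have h6 : (G x' - G x) / (x' - x) < (G x - G w₁) / (x - w₁) :=
    hGconc.slope_anti_adjacent ⟨hw₁, hw₁a⟩ hx'mem hwx hxx'
  have hanti := hGconc.concaveOn.slope_anti (x := x) hxmem
  have hkey : ∀ x'' ∈ Set.Ioo x' a, (G x'' - G x) / (x'' - x) ≤ (G x' - G x) / (x' - x) := by
    intro x'' hx''
    have := hanti ⟨hx'mem, by intro h; simp at h; linarith⟩
      ⟨⟨hxmem.1.trans (hxx'.trans hx''.1), hx''.2⟩, by intro h; simp at h; linarith [hx''.1]⟩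
      hx''.1.le
    simpa [slope_def_field] using this
  have htd2 : Filter.Tendsto (fun x'' => (G x'' - G x) / (x'' - x)) (nhdsWithin a (Set.Iio a))
      (nhds ((G a - G x) / (a - x))) :=
    tendsto_quot nhdsWithin_le_nhds (by intro h; linarith [sub_eq_zero.mp h])
      (hcontA.tendsto.mono_left nhdsWithin_le_nhds)
  have hev2 : ∀ᶠ x'' in nhdsWithin a (Set.Iio a),
      (G x'' - G x) / (x'' - x) ≤ (G x' - G x) / (x' - x) := by
    filter_upwards [Ioo_mem_nhdsLT_of_mem ⟨hx'a, le_refl a⟩] with x'' hx''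
    exact hkey x'' hx''
  have h7 : (G a - G x) / (a - x) ≤ (G x' - G x) / (x' - x) := le_of_tendsto htd2 hev2
  have h8 : (G a - G x) / (a - x) < n := lt_of_le_of_lt h7 (h6.trans h5)
  have h9 : G a - G x < n * (a - x) := (div_lt_iff₀ (by linarith)).mp h8
  linarith [keyA x ⟨hwx, hxa⟩]

/-- Two solutions cannot have `z₁ < w₁`. -/
private lemma left_lt_false {a c z₁ z₂ w₁ w₂ : ℝ} {G : ℝ → ℝ}
    (hGdiff : ∀ x ∈ Set.Ioi 0, x ≠ a → DifferentiableAt ℝ G x)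
    (hGconc : StrictConcaveOn ℝ (Set.Ioo 0 a) G)
    (SC : StrictConcaveOn ℝ (Set.Ici c) G)
    (hz₁ : 0 < z₁) (hz₁a : z₁ < a) (hcz₂ : c ≤ z₂) (haz₂ : a < z₂)
    (hw₁ : 0 < w₁) (hw₁a : w₁ < a) (hcw₂ : c ≤ w₂) (haw₂ : a < w₂)
    (hz3 : deriv G z₁ = (G z₂ - G z₁) / (z₂ - z₁))
    (hz4 : (G z₂ - G z₁) / (z₂ - z₁) = deriv G z₂)
    (hw3 : deriv G w₁ = (G w₂ - G w₁) / (w₂ - w₁))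
    (hw4 : (G w₂ - G w₁) / (w₂ - w₁) = deriv G w₂)
    (hlt : z₁ < w₁) : False := by
  have ha : (0:ℝ) < a := hz₁.trans hz₁a
  obtain ⟨m, hm⟩ : ∃ m, deriv G z₁ = m := ⟨_, rfl⟩
  obtain ⟨n, hn⟩ : ∃ n, deriv G w₁ = n := ⟨_, rfl⟩
  rw [hm] at hz3
  rw [hn] at hw3
  have hdiffz1 : DifferentiableAt ℝ G z₁ := hGdiff z₁ hz₁ (ne_of_lt hz₁a)
  have hdiffz2 : DifferentiableAt ℝ G z₂ := hGdiff z₂ (ha.trans haz₂) (ne_of_gt haz₂)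
  have hdiffw2 : DifferentiableAt ℝ G w₂ := hGdiff w₂ (ha.trans haw₂) (ne_of_gt haw₂)
  have hmn : n < m := by
    have := hGconc.strictAntiOn_deriv
      (fun x hx => hGdiff x (Set.mem_Ioi.mpr hx.1) (ne_of_lt hx.2))
      ⟨hz₁, hz₁a⟩ ⟨hw₁, hw₁a⟩ hlt
    rwa [hm, hn] at this
  have hdz2 : deriv G z₂ = m := (hz3.trans hz4).symm
  have hdw2 : deriv G w₂ = n := (hw3.trans hw4).symm
  have hGz2 : G z₂ - G z₁ = m * (z₂ - z₁) := by
    rw [hz3, div_mul_cancel₀ _ (ne_of_gt (by linarith : (0:ℝ) < z₂ - z₁))]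
  have hGw2 : G w₂ - G w₁ = n * (w₂ - w₁) := by
    rw [hw3, div_mul_cancel₀ _ (ne_of_gt (by linarith : (0:ℝ) < w₂ - w₁))]
  have hzw2ne : z₂ ≠ w₂ := by
    intro h
    rw [← hdz2, h, hdw2] at hmn
    exact lt_irrefl _ hmn
  -- tangent line at z₁ lies strictly above G at w₁
  have keyi : G w₁ - G z₁ < m * (w₁ - z₁) := by
    have := hGconc.slope_lt_deriv ⟨hz₁, hz₁a⟩ ⟨hw₁, hw₁a⟩ hlt hdiffz1
    rw [slope_def_field, hm] at this
    exact (div_lt_iff₀ (by linarith)).mp this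
  rcases lt_or_gt_of_ne hzw2ne with h | h
  · -- z₂ < w₂
    have hcs : deriv G w₂ < slope G z₂ w₂ :=
      SC.deriv_lt_slope (Set.mem_Ici.mpr hcz₂) (Set.mem_Ici.mpr hcw₂) h hdiffw2
    rw [slope_def_field, hdw2] at hcs
    have e : n * (w₂ - z₂) < G w₂ - G z₂ := (lt_div_iff₀ (by linarith)).mp hcs
    nlinarith [mul_pos (sub_pos.mpr hmn) (sub_pos.mpr (hw₁a.trans haz₂))]
  · -- w₂ < z₂
    have hcs : slope G w₂ z₂ < deriv G w₂ :=
      SC.slope_lt_deriv (Set.mem_Ici.mpr hcw₂) (Set.mem_Ici.mpr hcz₂) h hdiffw2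
    rw [slope_def_field, hdw2] at hcs
    have e : G z₂ - G w₂ < n * (z₂ - w₂) := (div_lt_iff₀ (by linarith)).mp hcs
    nlinarith [mul_pos (sub_pos.mpr hmn) (sub_pos.mpr (hw₁a.trans haz₂))]

/-- The system `G'(z₁) = (G(z₂)-G(z₁))/(z₂-z₁) = G'(z₂)`, `0 < z₁ < a < z₂`, has at most
one solution when `G` is strictly concave on `(0,a)`, convex on `(a,c)` and strictly
concave on `(c,∞)` (with possibly `c = ∞`, i.e. `G` convex on all of `(a,∞)`). -/
theorem stmt_5 (a : ℝ) (ha : 0 < a) (G : ℝ → ℝ)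
    (hGcont : ContinuousOn G (Set.Ioi 0))
    (hGdiff : ∀ x ∈ Set.Ioi 0, x ≠ a → DifferentiableAt ℝ G x)
    (hGconc : StrictConcaveOn ℝ (Set.Ioo 0 a) G)
    (hshape : (∃ c, a ≤ c ∧ ConvexOn ℝ (Set.Ioo a c) G ∧ StrictConcaveOn ℝ (Set.Ioi c) G)
      ∨ ConvexOn ℝ (Set.Ioi a) G) :
    ∀ z₁ z₂ w₁ w₂ : ℝ,
      (0 < z₁ ∧ z₁ < a ∧ a < z₂ ∧
        deriv G z₁ = (G z₂ - G z₁) / (z₂ - z₁) ∧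
        (G z₂ - G z₁) / (z₂ - z₁) = deriv G z₂) →
      (0 < w₁ ∧ w₁ < a ∧ a < w₂ ∧
        deriv G w₁ = (G w₂ - G w₁) / (w₂ - w₁) ∧
        (G w₂ - G w₁) / (w₂ - w₁) = deriv G w₂) →
      z₁ = w₁ ∧ z₂ = w₂ := by
  intro z₁ z₂ w₁ w₂ hz hw
  obtain ⟨hz₁, hz₁a, haz₂, hz3, hz4⟩ := hz
  obtain ⟨hw₁, hw₁a, haw₂, hw3, hw4⟩ := hw
  rcases hshape with ⟨c, hac, hconv, hconc⟩ | hconv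
  · -- right points cannot be in the convex region (a, c)
    have hcz₂ : c ≤ z₂ := by
      by_contra hcon
      push_neg at hcon
      exact no_right_convex hz₁ hz₁a haz₂ hGcont hGdiff hGconc hconv
        (fun t ht => ⟨ht.1, lt_of_le_of_lt ht.2 hcon⟩) hz3 hz4
    have hcw₂ : c ≤ w₂ := by
      by_contra hcon
      push_neg at hcon
      exact no_right_convex hw₁ hw₁a haw₂ hGcont hGdiff hGconc hconv
        (fun t ht => ⟨ht.1, lt_of_le_of_lt ht.2 hcon⟩) hw3 hw4
    have hc0 : (0:ℝ) < c := lt_of_lt_of_le ha hac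
    have SC : StrictConcaveOn ℝ (Set.Ici c) G :=
      strictConcave_Ici hconc (hGcont.continuousAt (isOpen_Ioi.mem_nhds hc0))
    have h1 : z₁ = w₁ := by
      rcases lt_trichotomy z₁ w₁ with h | h | h
      · exact absurd (left_lt_false hGdiff hGconc SC hz₁ hz₁a hcz₂ haz₂ hw₁ hw₁a hcw₂ haw₂
          hz3 hz4 hw3 hw4 h) (fun x => x)
      · exact h
      · exact absurd (left_lt_false hGdiff hGconc SC hw₁ hw₁a hcw₂ haw₂ hz₁ hz₁a hcz₂ haz₂
          hw3 hw4 hz3 hz4 h) (fun x => x)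
    refine ⟨h1, ?_⟩
    rw [← h1] at hw3 hw4
    obtain ⟨m, hm⟩ : ∃ m, deriv G z₁ = m := ⟨_, rfl⟩
    rw [hm] at hz3 hw3
    have hdz2 : deriv G z₂ = m := (hz3.trans hz4).symm
    have hdw2 : deriv G w₂ = m := (hw3.trans hw4).symm
    have hGz2 : G z₂ - G z₁ = m * (z₂ - z₁) := by
      rw [hz3, div_mul_cancel₀ _ (ne_of_gt (by linarith : (0:ℝ) < z₂ - z₁))]
    have hGw2 : G w₂ - G z₁ = m * (w₂ - z₁) := by
      rw [hw3, div_mul_cancel₀ _ (ne_of_gt (by linarith : (0:ℝ) < w₂ - z₁))]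
    have hdiffz2 : DifferentiableAt ℝ G z₂ := hGdiff z₂ (ha.trans haz₂) (ne_of_gt haz₂)
    have hdiffw2 : DifferentiableAt ℝ G w₂ := hGdiff w₂ (ha.trans haw₂) (ne_of_gt haw₂)
    rcases lt_trichotomy z₂ w₂ with h | h | h
    · exfalso
      have hcs : slope G z₂ w₂ < deriv G z₂ :=
        SC.slope_lt_deriv (Set.mem_Ici.mpr hcz₂) (Set.mem_Ici.mpr hcw₂) h hdiffz2
      rw [slope_def_field, hdz2] at hcs
      have : (G w₂ - G z₂) / (w₂ - z₂) = m := by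
        rw [div_eq_iff (ne_of_gt (by linarith : (0:ℝ) < w₂ - z₂))]
        nlinarith [hGz2, hGw2]
      linarith [this ▸ hcs]
    · exact h
    · exfalso
      have hcs : slope G w₂ z₂ < deriv G w₂ :=
        SC.slope_lt_deriv (Set.mem_Ici.mpr hcw₂) (Set.mem_Ici.mpr hcz₂) h hdiffw2
      rw [slope_def_field, hdw2] at hcs
      have : (G z₂ - G w₂) / (z₂ - w₂) = m := by
        rw [div_eq_iff (ne_of_gt (by linarith : (0:ℝ) < z₂ - w₂))]
        nlinarith [hGz2, hGw2]
      linarith [this ▸ hcs]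
  · -- G convex on all of (a,∞): no solution at all
    exact absurd (no_right_convex hz₁ hz₁a haz₂ hGcont hGdiff hGconc hconv
      (fun t ht => ht.1) hz3 hz4) (fun x => x)
end

section
/- Let G : [0,∞) → ℝ be continuous, and suppose z₁ < z₂ are such that G'(z₁) = (G(z₂)-G(z₁))/(z₂-z₁) = G'(z₂), G is concave on [0,z₁] and on [z₂,∞), and the line L(y) = G(z₁) + G'(z₁)(y - z₁) satisfies L(y) ≥ G(y) for all y ∈ [z₁,z₂]. Then the function W defined by W(y) = G(y) for y ∈ [0,z₁] ∪ [z₂,∞) and W(y) = L(y) for y ∈ (z₁,z₂) is the smallest concave function on [0,∞) that dominates G. -/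
open Set

private lemma concaveOn_congr' {s : Set ℝ} {f g : ℝ → ℝ} (hf : ConcaveOn ℝ s f)
    (h : ∀ x ∈ s, f x = g x) : ConcaveOn ℝ s g :=
  ⟨hf.1, fun x hx y hy a b ha hb hab => by
    rw [← h x hx, ← h y hy, ← h _ (hf.1 hx hy ha hb hab)]
    exact hf.2 hx hy ha hb hab⟩

/-- Gluing lemma: if `f` is concave on `s ∩ Iic b` and on `s ∩ Ici b`, and `f` lies below
a line through `(b, f b)` on all of `s`, then `f` is concave on `s`. -/
private lemma glue_concave {f : ℝ → ℝ} {s : Set ℝ} (hs : Convex ℝ s) {b m : ℝ} (hb : b ∈ s)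
    (h1 : ConcaveOn ℝ (s ∩ Iic b) f) (h2 : ConcaveOn ℝ (s ∩ Ici b) f)
    (hup : ∀ x ∈ s, f x ≤ f b + m * (x - b)) : ConcaveOn ℝ s f := by
  refine concaveOn_of_slope_anti_adjacent hs ?_
  intro x y z hx hz hxy hyz
  have hy : y ∈ s := hs.ordConnected.out hx hz ⟨hxy.le, hyz.le⟩
  rcases le_or_gt z b with hzb | hbz
  · exact h1.slope_anti_adjacent ⟨hx, ((hxy.trans hyz).le.trans hzb)⟩ ⟨hz, hzb⟩ hxy hyz
  rcases le_or_gt b x with hbx | hxb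
  · exact h2.slope_anti_adjacent ⟨hx, hbx⟩ ⟨hz, (hbx.trans (hxy.trans hyz).le)⟩ hxy hyz
  -- now x < b and b < z
  have hupx := hup x hx
  have hupy := hup y hy
  have hupz := hup z hz
  rcases lt_trichotomy y b with hyb | rfl | hby
  · -- y < b
    have h1d : (f b - f y) / (b - y) ≤ (f y - f x) / (y - x) :=
      h1.slope_anti_adjacent ⟨hx, (hxy.trans hyb).le⟩ ⟨hb, le_refl b⟩ hxy hyb
    set A := (f y - f x) / (y - x) with hA
    have s1 : m ≤ (f b - f y) / (b - y) := by
      rw [le_div_iff₀ (by linarith)]; linarith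
    have hA1 : m ≤ A := s1.trans h1d
    have e1 : f b - f y ≤ A * (b - y) := (div_le_iff₀ (by linarith)).mp h1d
    have e2 : f z - f b ≤ A * (z - b) :=
      le_trans (by linarith) (mul_le_mul_of_nonneg_right hA1 (by linarith))
    rw [div_le_iff₀ (by linarith)]
    have : A * (z - y) = A * (b - y) + A * (z - b) := by ring
    linarith
  · -- y = b
    rw [div_le_div_iff₀ (by linarith) (by linarith)]
    nlinarith [mul_le_mul_of_nonneg_right (show f z - f y ≤ m * (z - y) by linarith)
        (by linarith : (0:ℝ) ≤ y - x),
      mul_le_mul_of_nonneg_right (show m * (y - x) ≤ f y - f x by linarith)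
        (by linarith : (0:ℝ) ≤ z - y)]
  · -- b < y
    have h2d : (f z - f y) / (z - y) ≤ (f y - f b) / (y - b) :=
      h2.slope_anti_adjacent ⟨hb, le_refl b⟩ ⟨hz, (hby.trans hyz).le⟩ hby hyz
    set B := (f z - f y) / (z - y) with hB
    have s1 : (f y - f b) / (y - b) ≤ m := by
      rw [div_le_iff₀ (by linarith)]; linarith
    have hB1 : B ≤ m := h2d.trans s1
    have e1 : B * (y - b) ≤ f y - f b := (le_div_iff₀ (by linarith)).mp h2d
    have e2 : B * (b - x) ≤ f b - f x :=
      le_trans (mul_le_mul_of_nonneg_right hB1 (by linarith)) (by linarith)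
    rw [le_div_iff₀ (by linarith)]
    have : B * (y - x) = B * (y - b) + B * (b - x) := by ring
    linarith

/-- The function obtained by replacing `G` on `(z₁,z₂)` with the common tangent chord is
the smallest concave majorant of `G` on `[0,∞)`. -/
theorem stmt_6 (z₁ z₂ : ℝ) (hz₁ : 0 < z₁) (hz : z₁ < z₂) (G : ℝ → ℝ)
    (hGcont : ContinuousOn G (Set.Ici 0))
    (hd₁ : DifferentiableAt ℝ G z₁) (hd₂ : DifferentiableAt ℝ G z₂)
    (htan : deriv G z₁ = (G z₂ - G z₁) / (z₂ - z₁) ∧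
      (G z₂ - G z₁) / (z₂ - z₁) = deriv G z₂)
    (hconc₁ : ConcaveOn ℝ (Set.Icc 0 z₁) G)
    (hconc₂ : ConcaveOn ℝ (Set.Ici z₂) G)
    (hchord : ∀ y ∈ Set.Icc z₁ z₂, G y ≤ G z₁ + deriv G z₁ * (y - z₁)) :
    let W : ℝ → ℝ := fun y => if y ≤ z₁ ∨ z₂ ≤ y then G y else G z₁ + deriv G z₁ * (y - z₁)
    ConcaveOn ℝ (Set.Ici 0) W ∧ (∀ y ∈ Set.Ici (0:ℝ), G y ≤ W y) ∧
      ∀ W' : ℝ → ℝ, ConcaveOn ℝ (Set.Ici 0) W' → (∀ y ∈ Set.Ici (0:ℝ), G y ≤ W' y) →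
        ∀ y ∈ Set.Ici (0:ℝ), W y ≤ W' y := by
  obtain ⟨ht1, ht2⟩ := htan
  set m := deriv G z₁ with hm
  have hsub : (0:ℝ) < z₂ - z₁ := by linarith
  have hmz₂ : deriv G z₂ = m := by rw [← ht2, ht1]
  have hL2 : G z₁ + m * (z₂ - z₁) = G z₂ := by
    rw [ht1, div_mul_cancel₀ _ hsub.ne']; ring
  intro W
  have hWdef : ∀ x, W x = if x ≤ z₁ ∨ z₂ ≤ x then G x else G z₁ + m * (x - z₁) :=
    fun x => rfl
  have hWeqG : ∀ x, (x ≤ z₁ ∨ z₂ ≤ x) → W x = G x := by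
    intro x hx; rw [hWdef, if_pos hx]
  have hWz₁ : W z₁ = G z₁ := hWeqG z₁ (Or.inl le_rfl)
  have hWz₂ : W z₂ = G z₂ := hWeqG z₂ (Or.inr le_rfl)
  have hWL : ∀ x ∈ Icc z₁ z₂, W x = G z₁ + m * (x - z₁) := by
    intro x hx
    rw [hWdef]
    by_cases h : x ≤ z₁ ∨ z₂ ≤ x
    · rw [if_pos h]
      rcases h with h | h
      · have : x = z₁ := le_antisymm h hx.1
        rw [this]; ring
      · have : x = z₂ := le_antisymm hx.2 h
        rw [this, ← hL2]
    · rw [if_neg h]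
  -- tangent bound on [0, z₁]
  have hT1 : ∀ x ∈ Icc (0:ℝ) z₁, G x ≤ G z₁ + m * (x - z₁) := by
    intro x hx
    rcases eq_or_lt_of_le hx.2 with h | h
    · rw [h]; ring_nf; exact le_refl _
    · have hs := hconc₁.deriv_le_slope hx ⟨hz₁.le, le_refl z₁⟩ h hd₁
      rw [slope_def_field, ← hm, le_div_iff₀ (by linarith)] at hs
      linarith
  -- tangent bound on [z₂, ∞)
  have hT2 : ∀ x ∈ Ici z₂, G x ≤ G z₂ + m * (x - z₂) := by
    intro x hx
    rcases eq_or_lt_of_le (mem_Ici.1 hx) with h | h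
    · rw [← h]; ring_nf; exact le_refl _
    · have hs := hconc₂.slope_le_deriv (self_mem_Ici) hx h hd₂
      rw [slope_def_field, hmz₂, div_le_iff₀ (by linarith)] at hs
      linarith
  -- W lies below the tangent line everywhere on [0, ∞)
  have hupAll : ∀ x ∈ Ici (0:ℝ), W x ≤ G z₁ + m * (x - z₁) := by
    intro x hx
    by_cases h : x ≤ z₁ ∨ z₂ ≤ x
    · rw [hWeqG x h]
      rcases h with h | h
      · exact hT1 x ⟨hx, h⟩
      · have := hT2 x h
        calc G x ≤ G z₂ + m * (x - z₂) := this
          _ = G z₁ + m * (x - z₁) := by rw [← hL2]; ring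
    · push_neg at h
      rw [hWL x ⟨h.1.le, h.2.le⟩]
  -- affine function is concave
  have haff : ∀ s : Set ℝ, Convex ℝ s → ConcaveOn ℝ s (fun y => G z₁ + m * (y - z₁)) := by
    intro s hs
    refine ⟨hs, fun x _ y _ a b ha hb hab => ?_⟩
    simp only [smul_eq_mul]
    apply le_of_eq
    have hb1 : b = 1 - a := by linarith
    subst hb1; ring
  -- concavity on [0, z₂]
  have step1 : ConcaveOn ℝ (Icc 0 z₂) W := by
    refine glue_concave (convex_Icc 0 z₂) (b := z₁) (m := m) ⟨hz₁.le, hz.le⟩ ?_ ?_ ?_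
    · have hset : Icc (0:ℝ) z₂ ∩ Iic z₁ = Icc 0 z₁ := by
        ext t; simp only [mem_inter_iff, mem_Icc, mem_Iic]
        constructor
        · rintro ⟨⟨h0, _⟩, h1⟩; exact ⟨h0, h1⟩
        · rintro ⟨h0, h1⟩; exact ⟨⟨h0, h1.trans hz.le⟩, h1⟩
      rw [hset]
      exact concaveOn_congr' hconc₁ (fun x hx => (hWeqG x (Or.inl hx.2)).symm)
    · have hset : Icc (0:ℝ) z₂ ∩ Ici z₁ = Icc z₁ z₂ := by
        ext t; simp only [mem_inter_iff, mem_Icc, mem_Ici]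
        constructor
        · rintro ⟨⟨_, h2⟩, h1⟩; exact ⟨h1, h2⟩
        · rintro ⟨h1, h2⟩; exact ⟨⟨hz₁.le.trans h1, h2⟩, h1⟩
      rw [hset]
      exact concaveOn_congr' (haff _ (convex_Icc z₁ z₂)) (fun x hx => (hWL x hx).symm)
    · intro x hx
      rw [hWz₁]
      exact hupAll x hx.1
  -- concavity on [0, ∞)
  have hWconc : ConcaveOn ℝ (Ici 0) W := by
    refine glue_concave (convex_Ici 0) (b := z₂) (m := m) (by simp; linarith) ?_ ?_ ?_
    · have hset : Ici (0:ℝ) ∩ Iic z₂ = Icc 0 z₂ := by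
        ext t; simp [mem_Icc]
      rw [hset]; exact step1
    · have hset : Ici (0:ℝ) ∩ Ici z₂ = Ici z₂ := by
        ext t; simp only [mem_inter_iff, mem_Ici]
        constructor
        · rintro ⟨_, h⟩; exact h
        · intro h; exact ⟨le_trans (by linarith) h, h⟩
      rw [hset]
      exact concaveOn_congr' hconc₂ (fun x hx => (hWeqG x (Or.inr hx)).symm)
    · intro x hx
      rw [hWz₂, ← hL2]
      calc W x ≤ G z₁ + m * (x - z₁) := hupAll x hx
        _ = G z₁ + m * (z₂ - z₁) + m * (x - z₂) := by ring
  refine ⟨hWconc, ?_, ?_⟩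
  · -- G ≤ W
    intro y _
    by_cases h : y ≤ z₁ ∨ z₂ ≤ y
    · rw [hWeqG y h]
    · push_neg at h
      rw [hWL y ⟨h.1.le, h.2.le⟩]
      exact hchord y ⟨h.1.le, h.2.le⟩
  · -- minimality
    intro W' hW' hGW' y hy
    by_cases h : y ≤ z₁ ∨ z₂ ≤ y
    · rw [hWeqG y h]; exact hGW' y hy
    · push_neg at h
      obtain ⟨h1, h2⟩ := h
      set a := (z₂ - y) / (z₂ - z₁) with hadef
      set b := (y - z₁) / (z₂ - z₁) with hbdef
      have ha : 0 ≤ a := div_nonneg (by linarith) hsub.le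
      have hb : 0 ≤ b := div_nonneg (by linarith) hsub.le
      have hab : a + b = 1 := by
        rw [hadef, hbdef, ← add_div, div_eq_one_iff_eq hsub.ne']; ring
      have hcomb : a • z₁ + b • z₂ = y := by
        simp only [smul_eq_mul, hadef, hbdef]
        field_simp
        ring
      have hkey := hW'.2 (mem_Ici.2 hz₁.le) (mem_Ici.2 (by linarith : (0:ℝ) ≤ z₂)) ha hb hab
      rw [hcomb] at hkey
      have hWy : W y = a * G z₁ + b * G z₂ := by
        rw [hWL y ⟨h1.le, h2.le⟩, ← hL2, hbdef, hadef]
        field_simp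
        ring
      calc W y = a * G z₁ + b * G z₂ := hWy
        _ ≤ a * W' z₁ + b * W' z₂ := by
            have g1 := hGW' z₁ (mem_Ici.2 hz₁.le)
            have g2 := hGW' z₂ (mem_Ici.2 (by linarith : (0:ℝ) ≤ z₂))
            nlinarith
        _ ≤ W' y := by simpa [smul_eq_mul] using hkey
end

section
/- Let G : (0,∞) → ℝ be differentiable with G' nonnegative, and suppose there exist finite limits limsup_{x→∞} g'(x)/ψ'(x) = limsup_{x→∞} g(x)/ψ(x) = L∞ < ∞, where G'(F(x)) = (g'(x)φ(x) - g(x)φ'(x))/(ψ'(x)φ(x) - ψ(x)φ'(x)) with ψ' > 0, φ > 0, φ' < 0, ψ > 0. Then limsup_{x→∞} G'(F(x)) ≤ 2L∞. In particular G' is bounded above near infinity. -/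
open Set Filter
open scoped Topology

/-- If `limsup g/ψ = limsup g'/ψ' = L∞ < ∞`, then
`limsup_{x→∞} G'(F(x)) ≤ 2L∞`, where
`G'(F(x)) = (g'φ - gφ')/(ψ'φ - ψφ')`; in particular `G'∘F` is bounded above near `∞`. -/
theorem stmt_13 (Linf : ℝ) (g ψ φ F G : ℝ → ℝ)
    (hg0 : ∀ x ∈ Set.Ioi 0, 0 ≤ g x) (hg' : ∀ x ∈ Set.Ioi 0, 0 ≤ deriv g x)
    (hψpos : ∀ x ∈ Set.Ioi 0, 0 < ψ x) (hψ' : ∀ x ∈ Set.Ioi 0, 0 < deriv ψ x)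
    (hφpos : ∀ x ∈ Set.Ioi 0, 0 < φ x) (hφ' : ∀ x ∈ Set.Ioi 0, deriv φ x < 0)
    (hgd : ∀ x ∈ Set.Ioi 0, DifferentiableAt ℝ g x)
    (hψd : ∀ x ∈ Set.Ioi 0, DifferentiableAt ℝ ψ x)
    (hφd : ∀ x ∈ Set.Ioi 0, DifferentiableAt ℝ φ x)
    (hF : ∀ x ∈ Set.Ioi 0, F x = ψ x / φ x)
    (hFmono : StrictMonoOn F (Set.Ioi 0)) (hFtop : Tendsto F atTop atTop)
    (hbdd1 : IsBoundedUnder (· ≤ ·) atTop (fun x => g x / ψ x))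
    (hbdd2 : IsBoundedUnder (· ≤ ·) atTop (fun x => deriv g x / deriv ψ x))
    (hL1 : limsup (fun x => g x / ψ x) atTop = Linf)
    (hL2 : limsup (fun x => deriv g x / deriv ψ x) atTop = Linf)
    (hG : ∀ x ∈ Set.Ioi 0,
      deriv G (F x) = (deriv g x * φ x - g x * deriv φ x)
        / (deriv ψ x * φ x - ψ x * deriv φ x)) :
    limsup (fun x => deriv G (F x)) atTop ≤ 2 * Linf ∧
      ∃ M : ℝ, ∀ᶠ x in atTop, deriv G (F x) ≤ M := by
  -- Pointwise bound: G'(F x) ≤ g'/ψ' + g/ψ for x > 0.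
  have hev : ∀ᶠ x in atTop,
      deriv G (F x) ≤ deriv g x / deriv ψ x + g x / ψ x := by
    filter_upwards [eventually_gt_atTop 0] with x hx
    have hx' : x ∈ Set.Ioi (0:ℝ) := hx
    have hφx := hφpos x hx'
    have hφ'x := hφ' x hx'
    have hψx := hψpos x hx'
    have hψ'x := hψ' x hx'
    have hgx := hg0 x hx'
    have hg'x := hg' x hx'
    rw [hG x hx']
    set a := deriv g x * φ x with ha
    set b := g x * (-(deriv φ x)) with hb
    set c := deriv ψ x * φ x with hc
    set d := ψ x * (-(deriv φ x)) with hd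
    have hA : (0:ℝ) ≤ a := mul_nonneg hg'x hφx.le
    have hB : (0:ℝ) ≤ b := mul_nonneg hgx (by linarith)
    have hC : (0:ℝ) < c := mul_pos hψ'x hφx
    have hD : (0:ℝ) < d := mul_pos hψx (by linarith)
    have h1 : deriv g x * φ x - g x * deriv φ x = a + b := by rw [ha, hb]; ring
    have h2 : deriv ψ x * φ x - ψ x * deriv φ x = c + d := by rw [hc, hd]; ring
    rw [h1, h2]
    have key : (a + b) / (c + d) ≤ a / c + b / d := by
      have e1 : a / (c + d) ≤ a / c :=
        div_le_div_of_nonneg_left hA hC (by linarith)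
      have e2 : b / (c + d) ≤ b / d :=
        div_le_div_of_nonneg_left hB hD (by linarith)
      calc (a + b) / (c + d) = a / (c + d) + b / (c + d) := add_div a b _
        _ ≤ a / c + b / d := add_le_add e1 e2
    have ea : a / c = deriv g x / deriv ψ x := by
      rw [ha, hc, mul_div_mul_right _ _ hφx.ne']
    have eb : b / d = g x / ψ x := by
      rw [hb, hd, mul_div_mul_right _ _ (by linarith : -(deriv φ x) ≠ 0)]
    rw [ea, eb] at key
    exact key
  -- The bounding function is bounded above and below eventually.
  have hge2 : ∀ᶠ x in atTop, (0:ℝ) ≤ deriv g x / deriv ψ x := by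
    filter_upwards [eventually_gt_atTop 0] with x hx
    exact div_nonneg (hg' x hx) (hψ' x hx).le
  have hge1 : ∀ᶠ x in atTop, (0:ℝ) ≤ g x / ψ x := by
    filter_upwards [eventually_gt_atTop 0] with x hx
    exact div_nonneg (hg0 x hx) (hψpos x hx).le
  have hsum_bdd : IsBoundedUnder (· ≤ ·) atTop
      (fun x => deriv g x / deriv ψ x + g x / ψ x) := by
    obtain ⟨M1, hM1⟩ := hbdd1
    obtain ⟨M2, hM2⟩ := hbdd2
    refine ⟨M2 + M1, eventually_map.2 ?_⟩
    filter_upwards [eventually_map.1 hM1, eventually_map.1 hM2] with x h1 h2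
    exact add_le_add h2 h1
  have hcob : IsCoboundedUnder (· ≤ ·) atTop (fun x => deriv G (F x)) := by
    refine IsBoundedUnder.isCoboundedUnder_le ⟨0, eventually_map.2 ?_⟩
    filter_upwards [eventually_gt_atTop 0] with x hx
    have hx' : x ∈ Set.Ioi (0:ℝ) := hx
    rw [hG x hx']
    have hnum : 0 ≤ deriv g x * φ x - g x * deriv φ x := by
      have := mul_nonneg (hg' x hx') (hφpos x hx').le
      have := mul_nonpos_of_nonneg_of_nonpos (hg0 x hx') (hφ' x hx').le
      linarith
    have hden : 0 < deriv ψ x * φ x - ψ x * deriv φ x := by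
      have h1 := mul_pos (hψ' x hx') (hφpos x hx')
      have h2 := mul_neg_of_pos_of_neg (hψpos x hx') (hφ' x hx')
      linarith
    exact div_nonneg hnum hden.le
  have hls : limsup (fun x => deriv G (F x)) atTop ≤ 2 * Linf := by
    have step1 : limsup (fun x => deriv G (F x)) atTop ≤
        limsup (fun x => deriv g x / deriv ψ x + g x / ψ x) atTop :=
      limsup_le_limsup hev hcob hsum_bdd
    have step2 : limsup (fun x => deriv g x / deriv ψ x + g x / ψ x) atTop ≤
        limsup (fun x => deriv g x / deriv ψ x) atTop
          + limsup (fun x => g x / ψ x) atTop := by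
      have := limsup_add_le (f := atTop) (u := fun x => deriv g x / deriv ψ x)
        (v := fun x => g x / ψ x) ⟨0, eventually_map.2 hge2⟩ hbdd2
        (isCoboundedUnder_le_of_eventually_le atTop hge1) hbdd1
      simpa [Pi.add_def] using this
    rw [hL1, hL2] at step2
    calc limsup (fun x => deriv G (F x)) atTop
        ≤ _ := step1
      _ ≤ Linf + Linf := step2
      _ = 2 * Linf := by ring
  refine ⟨hls, ?_⟩
  obtain ⟨M, hM⟩ := hsum_bdd
  exact ⟨M, by filter_upwards [hev, eventually_map.1 hM] with x h1 h2 using h1.trans h2⟩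
end

section
/- Let H : (0,B) → ℝ be continuous, with a point y_h ∈ (0,B) where H attains its maximum and H'(y_h) = 0, H strictly concave on (y_h, y_H) for some y_H ∈ (y_h, B], H' (one-sided at y_H) negative on (y_h,y_H], and suppose the point (B, 0) lies on or above the tangent line of H at y_H (using the left derivative). Then there exists a unique z₀ ∈ [y_h, y_H] solving H'(z₀) = -H(z₀)/(B - z₀), i.e. the tangent line of H at z₀ passes through (B,0). -/
open Set

open Filter Topology

/-- Existence and uniqueness of the tangency point `z₀ ∈ [y_h, y_H]` whose tangent line
passes through `(B, 0)`, i.e. `H'(z₀)(B - z₀) + H(z₀) = 0`. -/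
theorem stmt_16 (B yh yH DH : ℝ) (hB : 0 < B) (hyh : 0 < yh) (hyhH : yh < yH)
    (hyHB : yH ≤ B) (H : ℝ → ℝ)
    (hHcont : ContinuousOn H (Set.Ioc 0 B))
    (hHdiff : ∀ y ∈ Set.Ioo 0 yH, DifferentiableAt ℝ H y)
    (hDH : HasDerivWithinAt H DH (Set.Iio yH) yH)
    (hHyh : 0 < H yh) (hH'yh : deriv H yh = 0)
    (hconc : StrictConcaveOn ℝ (Set.Icc yh yH) H)
    (hneg : (∀ y ∈ Set.Ioo yh yH, deriv H y < 0) ∧ DH < 0)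
    (htangB : DH * (B - yH) + H yH ≤ 0) :
    ∃! z₀, z₀ ∈ Set.Icc yh yH ∧
      (if z₀ = yH then DH else deriv H z₀) * (B - z₀) + H z₀ = 0 := by
  have hBz : ∀ z < yH, 0 < B - z := fun z hz => sub_pos.2 (hz.trans_le hyHB)
  -- The "generalized derivative" is strictly decreasing
  have hderiv_lt : ∀ z1 ∈ Set.Icc yh yH, ∀ z2 ∈ Set.Icc yh yH, z1 < z2 →
      (if z2 = yH then DH else deriv H z2) < deriv H z1 := by
    intro z1 h1 z2 h2 hlt
    have hd1 : DifferentiableAt ℝ H z1 := hHdiff z1 ⟨hyh.trans_le h1.1, hlt.trans_le h2.2⟩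
    have hs1 : slope H z1 z2 < deriv H z1 := hconc.slope_lt_deriv h1 h2 hlt hd1
    by_cases h2H : z2 = yH
    · subst h2H
      rw [if_pos rfl]
      exact (hconc.lt_slope_of_hasDerivWithinAt_Iio h1 h2 hlt hDH).trans hs1
    · rw [if_neg h2H]
      have hd2 : DifferentiableAt ℝ H z2 :=
        hHdiff z2 ⟨hyh.trans_le h2.1, lt_of_le_of_ne h2.2 h2H⟩
      exact (hconc.deriv_lt_slope h1 h2 hlt hd2).trans hs1
  -- tangent line inequality
  have htan : ∀ z1 ∈ Set.Icc yh yH, ∀ z2 ∈ Set.Icc yh yH, z1 < z2 →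
      H z2 < H z1 + deriv H z1 * (z2 - z1) := by
    intro z1 h1 z2 h2 hlt
    have hd1 : DifferentiableAt ℝ H z1 := hHdiff z1 ⟨hyh.trans_le h1.1, hlt.trans_le h2.2⟩
    have hs1 : slope H z1 z2 < deriv H z1 := hconc.slope_lt_deriv h1 h2 hlt hd1
    rw [slope_def_field] at hs1
    have h21 : 0 < z2 - z1 := sub_pos.2 hlt
    rw [div_lt_iff₀ h21] at hs1
    linarith
  -- strict antitonicity of the tangent-line-at-B value
  have hganti : ∀ z1 ∈ Set.Icc yh yH, ∀ z2 ∈ Set.Icc yh yH, z1 < z2 →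
      (if z2 = yH then DH else deriv H z2) * (B - z2) + H z2 <
        (if z1 = yH then DH else deriv H z1) * (B - z1) + H z1 := by
    intro z1 h1 z2 h2 hlt
    rw [if_neg (ne_of_lt (hlt.trans_le h2.2))]
    have hd := hderiv_lt z1 h1 z2 h2 hlt
    have ht := htan z1 h1 z2 h2 hlt
    have hB2 : 0 ≤ B - z2 := sub_nonneg.2 (h2.2.trans hyHB)
    nlinarith [mul_nonneg hB2 (sub_pos.2 hd).le]
  -- existence
  have hex : ∃ z₀ ∈ Set.Icc yh yH,
      (if z₀ = yH then DH else deriv H z₀) * (B - z₀) + H z₀ = 0 := by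
    rcases htangB.lt_or_eq with hLneg | hL0
    swap
    · exact ⟨yH, ⟨hyhH.le, le_refl _⟩, by rw [if_pos rfl]; exact hL0⟩
    -- slope at yH tends to DH
    have hslope : Tendsto (slope H yH) (𝓝[<] yH) (𝓝 DH) := by
      have := hasDerivWithinAt_iff_tendsto_slope.mp hDH
      rwa [Set.diff_singleton_eq_self (by simp)] at this
    set L := DH * (B - yH) + H yH with hL
    set δ := -L / (2 * (B - yH + 1)) with hδdef
    have hBH : 0 ≤ B - yH := sub_nonneg.2 hyHB
    have hδpos : 0 < δ := div_pos (neg_pos.2 hLneg) (by nlinarith)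
    have hev1 : ∀ᶠ z in 𝓝[<] yH, slope H yH z < DH + δ :=
      hslope.eventually_lt_const (lt_add_of_pos_right _ hδpos)
    have hev2 : ∀ᶠ z in 𝓝[<] yH, z ∈ Set.Ioo yh yH :=
      Ioo_mem_nhdsLT_of_mem ⟨hyhH, le_refl yH⟩
    obtain ⟨z₁, hz₁s, hz₁m⟩ := (hev1.and hev2).exists
    have hz₁yH : z₁ < yH := hz₁m.2
    have hz₁Icc : z₁ ∈ Set.Icc yh yH := ⟨hz₁m.1.le, hz₁yH.le⟩
    have hune : yH - z₁ ≠ 0 := ne_of_gt (sub_pos.2 hz₁yH)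
    have hHcontyH : ContinuousWithinAt H (Set.Iio yH) yH := hDH.continuousWithinAt
    have hu : Tendsto (fun z => (H z - H z₁) / (z - z₁) * (B - z) + H z) (𝓝[<] yH)
        (𝓝 ((H yH - H z₁) / (yH - z₁) * (B - yH) + H yH)) := by
      refine Tendsto.add (Tendsto.mul (Tendsto.div (hHcontyH.sub tendsto_const_nhds) ?_ hune) ?_)
        hHcontyH
      · exact ((continuous_id.sub continuous_const).continuousWithinAt)
      · exact ((continuous_const.sub continuous_id).continuousWithinAt)
    have hsl : (H yH - H z₁) / (yH - z₁) < DH + δ := by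
      have h' : (H yH - H z₁) / (yH - z₁) = slope H yH z₁ := by
        rw [slope_def_field, ← neg_sub (H z₁), ← neg_sub z₁, neg_div_neg_eq]
      rw [h']; exact hz₁s
    have hℓ : (H yH - H z₁) / (yH - z₁) * (B - yH) + H yH < 0 := by
      have h1 : (H yH - H z₁) / (yH - z₁) * (B - yH) ≤ (DH + δ) * (B - yH) :=
        mul_le_mul_of_nonneg_right hsl.le hBH
      have h2 : δ * (B - yH + 1) = -L / 2 := by
        rw [hδdef]; field_simp
      nlinarith
    have hev3 : ∀ᶠ z in 𝓝[<] yH, z ∈ Set.Ioo z₁ yH :=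
      Ioo_mem_nhdsLT_of_mem ⟨hz₁yH, le_refl yH⟩
    obtain ⟨z₂, hz₂u, hz₂m⟩ := ((hu.eventually_lt_const hℓ).and hev3).exists
    have hz₂yH : z₂ < yH := hz₂m.2
    have hyz₂ : yh < z₂ := hz₁m.1.trans hz₂m.1
    have hz₂Icc : z₂ ∈ Set.Icc yh yH := ⟨hyz₂.le, hz₂yH.le⟩
    have hd2 : DifferentiableAt ℝ H z₂ := hHdiff z₂ ⟨hyh.trans hyz₂, hz₂yH⟩
    have hds : deriv H z₂ < slope H z₁ z₂ := hconc.deriv_lt_slope hz₁Icc hz₂Icc hz₂m.1 hd2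
    rw [slope_def_field] at hds
    have hφ : deriv H z₂ * (B - z₂) + H z₂ < 0 := by
      have hB2 : 0 < B - z₂ := hBz z₂ hz₂yH
      have := mul_lt_mul_of_pos_right hds hB2
      linarith
    -- Darboux
    set ψ' : ℝ → ℝ := fun x => (deriv H x * (B - x) + H x) / (B - x) ^ 2 with hψ'
    have hderivψ : ∀ x ∈ Set.Icc yh z₂,
        HasDerivWithinAt (fun z => H z / (B - z)) (ψ' x) (Set.Icc yh z₂) x := by
      intro x hx
      have hxO : x ∈ Set.Ioo 0 yH := ⟨hyh.trans_le hx.1, lt_of_le_of_lt hx.2 hz₂yH⟩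
      have hBx : B - x ≠ 0 := ne_of_gt (hBz x hxO.2)
      have h1 : HasDerivAt (fun z : ℝ => B - z) (-1) x := by
        simpa using (hasDerivAt_id x).const_sub B
      have h2 := (hHdiff x hxO).hasDerivAt.div h1 hBx
      have e : ψ' x = (deriv H x * (B - x) - H x * -1) / (B - x) ^ 2 := by rw [hψ']; ring
      rw [e]; exact h2.hasDerivWithinAt
    have hByh : 0 < B - yh := hBz yh hyhH
    have hψa : (0 : ℝ) < ψ' yh := by
      have h4 : ψ' yh = H yh / (B - yh) ^ 2 := by simp [hψ', hH'yh]
      rw [h4]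
      exact div_pos hHyh (pow_pos hByh 2)
    have hψb : ψ' z₂ < 0 := div_neg_of_neg_of_pos hφ (pow_pos (hBz z₂ hz₂yH) 2)
    obtain ⟨c, hc, hceq⟩ := exists_hasDerivWithinAt_eq_of_lt_of_gt hyz₂.le hderivψ hψa hψb
    have hcyH : c < yH := hc.2.trans hz₂yH
    have hnum : deriv H c * (B - c) + H c = 0 := by
      have h3 := hceq
      simp only [hψ'] at h3
      rw [div_eq_zero_iff] at h3
      rcases h3 with h3 | h3
      · exact h3
      · exact absurd h3 (pow_ne_zero 2 (ne_of_gt (hBz c hcyH)))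
    exact ⟨c, ⟨hc.1.le, hcyH.le⟩, by rw [if_neg (ne_of_lt hcyH)]; exact hnum⟩
  obtain ⟨z₀, hz₀m, hz₀e⟩ := hex
  refine ⟨z₀, ⟨hz₀m, hz₀e⟩, ?_⟩
  rintro y ⟨hym, hye⟩
  by_contra hne
  rcases lt_or_gt_of_ne hne with h | h
  · have := hganti y hym z₀ hz₀m h
    rw [hye, hz₀e] at this
    exact lt_irrefl 0 this
  · have := hganti z₀ hz₀m y hym h
    rw [hye, hz₀e] at this
    exact lt_irrefl 0 this
end
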